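/- Let N ≥ 2 be an integer and let η denote the Dedekind eta function. For every τ in the complex upper half-plane, (1/(2πi)) · (N · η′(Nτ)/η(Nτ) − η′(τ)/η(τ)) = E₂^{(N)}(τ); that is, the logarithmic derivative (1/(2πi)) d/dτ log(η(Nτ)/η(τ)) equals the Eisenstein series (N−1)/24 + Σ_{n≥1} σ₁(n)(qⁿ − N q^{Nn}). -/

import Mathlib

open Complex UpperHalfPlane Matrix MatrixGroups Filter

/-- `q = e^{2πiτ}`. -/
noncomputable def qExp (τ : ℂ) : ℂ := Complex.exp (2 * Real.pi * Complex.I * τ)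

/-- `σ_k(n) = Σ_{d ∣ n} d^k`. -/
def sigma' (k n : ℕ) : ℕ := ∑ d ∈ n.divisors, d ^ k

/-- Normalized Eisenstein series `E₄(τ) = 1 + 240 Σ_{n≥1} σ₃(n) qⁿ`. -/
noncomputable def E4 (τ : ℂ) : ℂ := 1 + 240 * ∑' n : ℕ+, (sigma' 3 n : ℂ) * qExp τ ^ (n : ℕ)

/-- Normalized Eisenstein series `E₆(τ) = 1 − 504 Σ_{n≥1} σ₅(n) qⁿ`. -/
noncomputable def E6 (τ : ℂ) : ℂ := 1 - 504 * ∑' n : ℕ+, (sigma' 5 n : ℂ) * qExp τ ^ (n : ℕ)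

/-- Normalized weight-2 Eisenstein series `E₂(τ) = 1 − 24 Σ_{n≥1} σ₁(n) qⁿ`. -/
noncomputable def E2 (τ : ℂ) : ℂ := 1 - 24 * ∑' n : ℕ+, (sigma' 1 n : ℂ) * qExp τ ^ (n : ℕ)

/-- `E₂^{(N)}(τ) = (N−1)/24 + Σ_{n≥1} σ₁(n)(qⁿ − N q^{Nn})`. -/
noncomputable def E2N (N : ℕ) (τ : ℂ) : ℂ :=
  ((N : ℂ) - 1) / 24 +
    ∑' n : ℕ+, (sigma' 1 n : ℂ) * (qExp τ ^ (n : ℕ) - (N : ℂ) * qExp τ ^ (N * (n : ℕ)))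

/-- `a₄(τ) = −E₄(τ)/(48 E₂^{(N)}(τ)²)`. -/
noncomputable def a4 (N : ℕ) (τ : ℂ) : ℂ := -E4 τ / (48 * E2N N τ ^ 2)

/-- `a₆(τ) = E₆(τ)/(864 E₂^{(N)}(τ)³)`. -/
noncomputable def a6 (N : ℕ) (τ : ℂ) : ℂ := E6 τ / (864 * E2N N τ ^ 3)

/-- `a₄′(τ) = −E₄(Nτ)/(48 E₂^{(N)}(τ)²)`. -/
noncomputable def a4' (N : ℕ) (τ : ℂ) : ℂ := -E4 ((N : ℂ) * τ) / (48 * E2N N τ ^ 2)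

/-- `a₆′(τ) = E₆(Nτ)/(864 E₂^{(N)}(τ)³)`. -/
noncomputable def a6' (N : ℕ) (τ : ℂ) : ℂ := E6 ((N : ℂ) * τ) / (864 * E2N N τ ^ 3)

/-- The Dedekind eta function `η(τ) = e^{πiτ/12} ∏_{n≥1} (1 − qⁿ)`. -/
noncomputable def dedekindEta (τ : ℂ) : ℂ :=
  Complex.exp ((Real.pi : ℂ) * Complex.I * τ / 12) * ∏' n : ℕ+, (1 - qExp τ ^ (n : ℕ))

namespace EtaAux


noncomputable def Fq (q : ℂ) : ℕ × ℕ → ℂ := fun p =>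
  if p.1 = 0 ∨ p.2 = 0 then 0 else (p.1 : ℂ) * q ^ (p.1 * p.2)

set_option maxHeartbeats 1000000 in
lemma summable_Fq {q : ℂ} (hq : ‖q‖ < 1) : Summable (Fq q) := by
  have hinj : Function.Injective (fun p : ℕ × ℕ => ((p.1 + 1, p.2 + 1) : ℕ × ℕ)) := by
    intro p p' h
    simp only [Prod.mk.injEq, add_left_inj] at h
    exact Prod.ext h.1 h.2
  rw [← Function.Injective.summable_iff hinj (by
    rintro ⟨a, b⟩ hx
    by_cases ha : a = 0
    · simp [Fq, ha]
    by_cases hb : b = 0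
    · simp [Fq, hb]
    · exact absurd ⟨(a - 1, b - 1), by
        simp only [Prod.mk.injEq]
        omega⟩ hx)]
  have hf : Summable (fun n : ℕ => (n + 1 : ℝ) * ‖q‖ ^ (n + 1)) := by
    have h0 := summable_pow_mul_geometric_of_norm_lt_one (R := ℝ) (r := ‖q‖) 1
      (by rwa [Real.norm_eq_abs, abs_norm])
    have h1 := h0.comp_injective Nat.succ_injective
    apply h1.congr
    intro n
    simp only [Function.comp, pow_one, Nat.succ_eq_add_one]
    push_cast
    ring
  have hb : Summable (fun p : ℕ × ℕ => ((p.1 + 1 : ℝ) * ‖q‖ ^ (p.1 + 1)) * ‖q‖ ^ p.2) :=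
    Summable.mul_of_nonneg hf (summable_geometric_of_lt_one (norm_nonneg q) hq)
      (fun n => by positivity) (fun n => by positivity)
  apply Summable.of_norm_bounded hb
  rintro ⟨a, b⟩
  simp only [Function.comp, Fq, Nat.succ_ne_zero, or_self, if_false]
  rw [norm_mul, norm_pow, Complex.norm_natCast]
  push_cast
  have h1 : ‖q‖ ^ ((a + 1) * (b + 1)) ≤ ‖q‖ ^ (a + 1) * ‖q‖ ^ b := by
    rw [← pow_add]
    apply pow_le_pow_of_le_one (norm_nonneg q) hq.le
    nlinarith
  calc (a + 1 : ℝ) * ‖q‖ ^ ((a + 1) * (b + 1))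
      ≤ (a + 1 : ℝ) * (‖q‖ ^ (a + 1) * ‖q‖ ^ b) := by
        apply mul_le_mul_of_nonneg_left h1 (by positivity)
    _ = (a + 1 : ℝ) * ‖q‖ ^ (a + 1) * ‖q‖ ^ b := by ring

lemma hasSum_sigma_q {q : ℂ} (hq : ‖q‖ < 1) :
    HasSum (fun m : ℕ => (sigma' 1 m : ℂ) * q ^ m) (∑' p : ℕ × ℕ, Fq q p) := by
  have h := (summable_Fq hq).hasSum.tsum_fiberwise (fun p => p.1 * p.2)
  have key : ∀ m : ℕ, (∑' x : (fun p : ℕ × ℕ => p.1 * p.2) ⁻¹' {m}, Fq q x)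
      = (sigma' 1 m : ℂ) * q ^ m := by
    intro m
    rcases eq_or_ne m 0 with rfl | hm
    · have hz : ∀ x : (fun p : ℕ × ℕ => p.1 * p.2) ⁻¹' {(0:ℕ)}, Fq q x = 0 := by
        rintro ⟨⟨a, b⟩, hx⟩
        simp only [Set.mem_preimage, Set.mem_singleton_iff, Nat.mul_eq_zero] at hx
        rcases hx with rfl | rfl <;> simp [Fq]
      rw [tsum_congr hz, tsum_zero]
      simp [sigma']
    · rw [show (fun p : ℕ × ℕ => p.1 * p.2) ⁻¹' {m} = (m.divisorsAntidiagonal : Set (ℕ × ℕ)) by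
        ext p; simp [Nat.mem_divisorsAntidiagonal, hm],
        Finset.tsum_subtype' m.divisorsAntidiagonal (Fq q)]
      have hc : ∀ p ∈ m.divisorsAntidiagonal, Fq q p = (p.1 : ℂ) * q ^ m := by
        intro p hp
        obtain ⟨h1, h2⟩ := Nat.ne_zero_of_mem_divisorsAntidiagonal hp
        simp only [Fq, h1, h2, or_self, if_false]
        rw [(Nat.mem_divisorsAntidiagonal.mp hp).1]
      rw [Finset.sum_congr rfl hc, ← Finset.sum_mul]
      congr 1
      rw [show (∑ p ∈ m.divisorsAntidiagonal, (p.1 : ℂ)) =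
          ∑ p ∈ m.divisorsAntidiagonal, (fun d e => (d : ℂ)) p.1 p.2 from rfl,
        Nat.sum_divisorsAntidiagonal (fun d e => (d : ℂ))]
      simp [sigma']
  exact (funext key) ▸ h

lemma tsum_Fq {q : ℂ} (hq : ‖q‖ < 1) :
    ∑' p : ℕ × ℕ, Fq q p = ∑' n : ℕ+, (n : ℂ) * q ^ (n : ℕ) / (1 - q ^ (n : ℕ)) := by
  rw [Summable.tsum_prod' (summable_Fq hq) (fun n => (summable_Fq hq).prod_factor n)]
  have inner : ∀ n : ℕ, (∑' k : ℕ, Fq q (n, k))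
      = (fun n : ℕ => if n = 0 then 0 else (n : ℂ) * q ^ n / (1 - q ^ n)) n := by
    intro n
    rcases eq_or_ne n 0 with rfl | hn
    · simp [Fq]
    have hqn : ‖q ^ n‖ < 1 := by
      rw [norm_pow]
      exact pow_lt_one₀ (norm_nonneg q) hq (by omega)
    simp only [hn, if_false]
    rw [Summable.tsum_eq_zero_add ((summable_Fq hq).prod_factor n)]
    have h0 : Fq q (n, 0) = 0 := by simp [Fq]
    have hterm : ∀ k : ℕ, Fq q (n, k + 1) = ((n : ℂ) * q ^ n) * (q ^ n) ^ k := by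
      intro k
      simp only [Fq, hn, Nat.succ_ne_zero, or_self, if_false]
      rw [show n * (k + 1) = n + n * k by ring, pow_add, pow_mul]
      ring
    rw [h0, zero_add, tsum_congr hterm, tsum_mul_left,
      tsum_geometric_of_norm_lt_one hqn, div_eq_mul_inv]
  rw [tsum_congr inner]
  rw [← Function.Injective.tsum_eq (g := ((↑) : ℕ+ → ℕ)) PNat.coe_injective (by
    intro x hx
    rcases eq_or_ne x 0 with rfl | hx0
    · simp at hx
    · exact ⟨⟨x, Nat.pos_of_ne_zero hx0⟩, rfl⟩)]
  apply tsum_congr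
  intro n
  simp [n.ne_zero]

lemma lambert {q : ℂ} (hq : ‖q‖ < 1) :
    ∑' n : ℕ+, (n : ℂ) * q ^ (n : ℕ) / (1 - q ^ (n : ℕ))
      = ∑' m : ℕ+, (sigma' 1 m : ℂ) * q ^ (m : ℕ) := by
  rw [← tsum_Fq hq, ← (hasSum_sigma_q hq).tsum_eq]
  rw [← Function.Injective.tsum_eq (g := ((↑) : ℕ+ → ℕ)) PNat.coe_injective (by
    intro x hx
    rcases eq_or_ne x 0 with rfl | hx0
    · simp [sigma'] at hx
    · exact ⟨⟨x, Nat.pos_of_ne_zero hx0⟩, rfl⟩)]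

lemma summable_sigma_q {q : ℂ} (hq : ‖q‖ < 1) :
    Summable (fun m : ℕ+ => (sigma' 1 m : ℂ) * q ^ (m : ℕ)) :=
  ((hasSum_sigma_q hq).summable.comp_injective PNat.coe_injective)



lemma norm_qExp (z : ℂ) : ‖qExp z‖ = Real.exp (-(2 * Real.pi * z.im)) := by
  rw [qExp, Complex.norm_exp]
  congr 1
  simp [Complex.mul_im, Complex.mul_re]

lemma norm_qExp_lt_one {z : ℂ} (hz : 0 < z.im) : ‖qExp z‖ < 1 := by
  rw [norm_qExp, Real.exp_lt_one_iff]
  have := Real.pi_pos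
  nlinarith

lemma hasDerivAt_qExp (z : ℂ) :
    HasDerivAt qExp (2 * Real.pi * Complex.I * qExp z) z := by
  have h := (((hasDerivAt_id z).const_mul (2 * (Real.pi:ℂ) * Complex.I)).cexp)
  have hq : qExp = fun x => cexp (2 * (Real.pi:ℂ) * Complex.I * x) := rfl
  rw [hq]
  convert h using 1
  · rfl
  · rfl
  simp [qExp]
  ring

lemma one_sub_ne_zero_of_norm_lt_one {w : ℂ} (hw : ‖w‖ < 1) : (1 : ℂ) - w ≠ 0 := by
  intro h
  have : w = 1 := by linear_combination -h
  simp [this] at hw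

lemma one_sub_mem_slitPlane {w : ℂ} (hw : ‖w‖ < 1) : (1 : ℂ) - w ∈ Complex.slitPlane := by
  have := Complex.mem_slitPlane_of_norm_lt_one (z := -w) (by simpa using hw)
  simpa [sub_eq_add_neg] using this

lemma norm_log_one_sub_pow_le {q : ℂ} (hq : ‖q‖ < 1) (n : ℕ) (hn : 1 ≤ n) :
    ‖Complex.log (1 - q ^ n)‖ ≤ (‖q‖ * (1 - ‖q‖)⁻¹ / 2 + 1) * ‖q‖ ^ n := by
  set r := ‖q‖ with hr
  have hr0 : 0 ≤ r := norm_nonneg q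
  have hwn : ‖q ^ n‖ = r ^ n := norm_pow q n
  have hrn_le_r : r ^ n ≤ r := by
    calc r ^ n ≤ r ^ 1 := pow_le_pow_of_le_one hr0 hq.le hn
    _ = r := pow_one r
  have hwlt : ‖-(q ^ n)‖ < 1 := by
    rw [norm_neg, hwn]; exact lt_of_le_of_lt hrn_le_r hq
  have h := Complex.norm_log_one_add_le hwlt
  rw [show (1 : ℂ) + -(q ^ n) = 1 - q ^ n by ring] at h
  rw [norm_neg, hwn] at h
  refine h.trans ?_
  have hinv : (1 - r ^ n)⁻¹ ≤ (1 - r)⁻¹ := by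
    apply inv_anti₀ (by linarith) (by linarith)
  have hb : (0:ℝ) < 1 - r := by linarith
  have hbn : (0:ℝ) < 1 - r ^ n := by
    have : r ^ n ≤ r := hrn_le_r
    linarith
  have hrnn : 0 ≤ r ^ n := pow_nonneg hr0 n
  have key : (r ^ n) ^ 2 * (1 - r ^ n)⁻¹ ≤ r ^ n * r * (1 - r)⁻¹ := by
    have h1 : (r ^ n) ^ 2 ≤ r ^ n * r := by nlinarith
    have h2 : (0:ℝ) ≤ (1 - r)⁻¹ := by positivity
    have h3 : (0:ℝ) ≤ (1 - r ^ n)⁻¹ := by positivity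
    nlinarith
  nlinarith

lemma summable_log_one_sub_pow {q : ℂ} (hq : ‖q‖ < 1) :
    Summable (fun n : ℕ+ => Complex.log (1 - q ^ (n : ℕ))) := by
  have hgeo : Summable (fun n : ℕ => (‖q‖ * (1 - ‖q‖)⁻¹ / 2 + 1) * ‖q‖ ^ n) :=
    (summable_geometric_of_lt_one (norm_nonneg q) hq).mul_left _
  have h2 : Summable (fun n : ℕ+ => (‖q‖ * (1 - ‖q‖)⁻¹ / 2 + 1) * ‖q‖ ^ (n : ℕ)) :=
    hgeo.comp_injective PNat.coe_injective
  exact Summable.of_norm_bounded h2 (fun n => norm_log_one_sub_pow_le hq n n.2)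

lemma eta_eq_exp {z : ℂ} (hz : 0 < z.im) :
    dedekindEta z = Complex.exp ((Real.pi : ℂ) * Complex.I * z / 12 +
      ∑' n : ℕ+, Complex.log (1 - qExp z ^ (n : ℕ))) := by
  rw [Complex.exp_add, dedekindEta]
  congr 1
  have h := Complex.cexp_tsum_eq_tprod (f := fun n : ℕ+ => 1 - qExp z ^ (n : ℕ))
    (fun n => one_sub_ne_zero_of_norm_lt_one (by
      rw [norm_pow]
      exact pow_lt_one₀ (norm_nonneg _) (norm_qExp_lt_one hz) n.ne_zero))
    (summable_log_one_sub_pow (norm_qExp_lt_one hz))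
  exact h.symm



lemma hasDerivAt_log_term (n : ℕ+) {w : ℂ} (hw : 0 < w.im) :
    HasDerivAt (fun v => Complex.log (1 - qExp v ^ (n : ℕ)))
      ((-(2 * (Real.pi : ℂ) * Complex.I)) *
        ((n : ℂ) * qExp w ^ (n : ℕ) / (1 - qExp w ^ (n : ℕ)))) w := by
  have hqn : ‖qExp w ^ (n : ℕ)‖ < 1 := by
    rw [norm_pow]
    exact pow_lt_one₀ (norm_nonneg _) (norm_qExp_lt_one hw) n.ne_zero
  have h1 : HasDerivAt (fun v => qExp v ^ (n : ℕ))
      (((n : ℕ) : ℂ) * qExp w ^ ((n : ℕ) - 1) * (2 * Real.pi * Complex.I * qExp w)) w :=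
    (hasDerivAt_qExp w).pow (n : ℕ)
  have h2 := h1.const_sub 1
  have h3 := h2.clog (one_sub_mem_slitPlane hqn)
  convert h3 using 1
  have hpow : qExp w ^ ((n : ℕ) - 1) * qExp w = qExp w ^ (n : ℕ) := by
    rw [← pow_succ]
    congr 1
    exact Nat.succ_pred_eq_of_pos n.2
  rw [← hpow]
  ring

lemma hasDerivAt_logSum {z : ℂ} (hz : 0 < z.im) :
    HasDerivAt (fun w => ∑' n : ℕ+, Complex.log (1 - qExp w ^ (n : ℕ)))
      (∑' n : ℕ+, (-(2 * (Real.pi : ℂ) * Complex.I)) *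
        ((n : ℂ) * qExp z ^ (n : ℕ) / (1 - qExp z ^ (n : ℕ)))) z := by
  set r : ℝ := Real.exp (-(Real.pi * z.im)) with hrdef
  have hr1 : r < 1 := by
    rw [hrdef, Real.exp_lt_one_iff]
    have := Real.pi_pos
    nlinarith
  have hr0 : 0 < r := Real.exp_pos _
  set t : Set ℂ := Metric.ball z (z.im / 2) with htdef
  have hmem : ∀ w ∈ t, ‖qExp w‖ ≤ r := by
    intro w hw
    rw [norm_qExp, hrdef, Real.exp_le_exp]
    have him : |w.im - z.im| < z.im / 2 := by
      have hd : dist w z < z.im / 2 := Metric.mem_ball.mp hw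
      calc |w.im - z.im| = |(w - z).im| := by simp
        _ ≤ ‖w - z‖ := Complex.abs_im_le_norm _
        _ = dist w z := (Complex.dist_eq w z).symm
        _ < z.im / 2 := hd
    rw [abs_lt] at him
    have := Real.pi_pos
    nlinarith
  have himt : ∀ w ∈ t, 0 < w.im := by
    intro w hw
    have him : |w.im - z.im| < z.im / 2 := by
      have hd : dist w z < z.im / 2 := Metric.mem_ball.mp hw
      calc |w.im - z.im| = |(w - z).im| := by simp
        _ ≤ ‖w - z‖ := Complex.abs_im_le_norm _
        _ = dist w z := (Complex.dist_eq w z).symm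
        _ < z.im / 2 := hd
    rw [abs_lt] at him
    linarith [hz]
  have hu : Summable (fun n : ℕ+ => (2 * Real.pi * (1 - r)⁻¹) * ((n : ℕ) * r ^ (n : ℕ))) := by
    have h0 := summable_pow_mul_geometric_of_norm_lt_one (R := ℝ) (r := r) 1
      (by rw [Real.norm_eq_abs, abs_of_pos hr0]; exact hr1)
    have h1 := (h0.mul_left (2 * Real.pi * (1 - r)⁻¹)).comp_injective PNat.coe_injective
    apply h1.congr
    intro n
    simp [Function.comp, pow_one]
  refine hasDerivAt_tsum_of_isPreconnected hu Metric.isOpen_ball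
    (convex_ball z (z.im/2)).isPreconnected
    (fun n w hw => hasDerivAt_log_term n (himt w hw)) ?_
    (Metric.mem_ball_self (by linarith)) (summable_log_one_sub_pow (norm_qExp_lt_one hz))
    (Metric.mem_ball_self (by linarith))
  intro n w hw
  have hqw : ‖qExp w‖ ≤ r := hmem w hw
  have hqn : ‖qExp w ^ (n : ℕ)‖ ≤ r ^ (n : ℕ) := by
    rw [norm_pow]
    exact pow_le_pow_left₀ (norm_nonneg _) hqw _
  have hrn_le_r : r ^ (n : ℕ) ≤ r := by
    calc r ^ (n : ℕ) ≤ r ^ 1 := pow_le_pow_of_le_one hr0.le hr1.le n.2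
      _ = r := pow_one r
  have hne : ‖1 - qExp w ^ (n : ℕ)‖ ≥ 1 - r := by
    calc ‖1 - qExp w ^ (n : ℕ)‖ ≥ ‖(1:ℂ)‖ - ‖qExp w ^ (n : ℕ)‖ := by
          apply norm_sub_norm_le
      _ ≥ 1 - r := by
          rw [norm_one]
          have : ‖qExp w ^ (n : ℕ)‖ ≤ r := le_trans hqn hrn_le_r
          linarith
  have h2pi : ‖(2 * (Real.pi : ℂ) * Complex.I)‖ = 2 * Real.pi := by
    rw [norm_mul, norm_mul, Complex.norm_I, mul_one]
    norm_num [Complex.norm_real, Real.norm_eq_abs, abs_of_pos Real.pi_pos]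
  have hb : (0:ℝ) < 1 - r := by linarith
  have hnum : ‖(n : ℂ) * qExp w ^ (n : ℕ)‖ ≤ (n : ℕ) * r ^ (n : ℕ) := by
    rw [norm_mul, Complex.norm_natCast]
    exact mul_le_mul_of_nonneg_left hqn (Nat.cast_nonneg _)
  calc ‖(-(2 * (Real.pi : ℂ) * Complex.I)) * ((n : ℂ) * qExp w ^ (n : ℕ) / (1 - qExp w ^ (n : ℕ)))‖
      = 2 * Real.pi * (‖(n : ℂ) * qExp w ^ (n : ℕ)‖ / ‖1 - qExp w ^ (n : ℕ)‖) := by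
        rw [norm_mul, norm_neg, norm_div, h2pi]
    _ ≤ 2 * Real.pi * (((n : ℕ) * r ^ (n : ℕ)) / (1 - r)) := by
        apply mul_le_mul_of_nonneg_left ?_ (by positivity)
        apply div_le_div₀ (by positivity) hnum hb hne
    _ = 2 * Real.pi * (1 - r)⁻¹ * ((n : ℕ) * r ^ (n : ℕ)) := by
        field_simp

lemma eta_ne_zero {z : ℂ} (hz : 0 < z.im) : dedekindEta z ≠ 0 := by
  rw [eta_eq_exp hz]
  exact Complex.exp_ne_zero _

lemma eta_hasDerivAt {z : ℂ} (hz : 0 < z.im) :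
    HasDerivAt dedekindEta
      (dedekindEta z * ((Real.pi : ℂ) * Complex.I / 12 +
        ∑' n : ℕ+, (-(2 * (Real.pi : ℂ) * Complex.I)) *
          ((n : ℂ) * qExp z ^ (n : ℕ) / (1 - qExp z ^ (n : ℕ))))) z := by
  have hlin : HasDerivAt (fun w : ℂ => (Real.pi : ℂ) * Complex.I * w / 12)
      ((Real.pi : ℂ) * Complex.I / 12) z := by
    simpa using (((hasDerivAt_id z).const_mul ((Real.pi : ℂ) * Complex.I)).div_const 12)
  have hG : HasDerivAt (fun w : ℂ => (Real.pi : ℂ) * Complex.I * w / 12 +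
      ∑' n : ℕ+, Complex.log (1 - qExp w ^ (n : ℕ)))
      ((Real.pi : ℂ) * Complex.I / 12 +
        ∑' n : ℕ+, (-(2 * (Real.pi : ℂ) * Complex.I)) *
          ((n : ℂ) * qExp z ^ (n : ℕ) / (1 - qExp z ^ (n : ℕ)))) z :=
    hlin.add (hasDerivAt_logSum hz)
  have hexp := hG.cexp
  have hev : dedekindEta =ᶠ[nhds z] (fun w => Complex.exp ((Real.pi : ℂ) * Complex.I * w / 12 +
      ∑' n : ℕ+, Complex.log (1 - qExp w ^ (n : ℕ)))) := by
    have hopen : IsOpen {w : ℂ | 0 < w.im} := by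
      exact isOpen_lt continuous_const Complex.continuous_im
    filter_upwards [hopen.mem_nhds hz] with w hw
    exact eta_eq_exp hw
  have := hexp.congr_of_eventuallyEq hev
  rwa [← eta_eq_exp hz] at this

lemma eta_logDeriv {z : ℂ} (hz : 0 < z.im) :
    deriv dedekindEta z / dedekindEta z
      = (Real.pi : ℂ) * Complex.I / 12 -
        2 * (Real.pi : ℂ) * Complex.I *
          ∑' m : ℕ+, (sigma' 1 m : ℂ) * qExp z ^ (m : ℕ) := by
  rw [(eta_hasDerivAt hz).deriv, mul_div_cancel_left₀ _ (eta_ne_zero hz)]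
  rw [tsum_mul_left, lambert (norm_qExp_lt_one hz)]
  ring


lemma qExp_nat_mul (N : ℕ) (z : ℂ) : qExp ((N : ℂ) * z) = qExp z ^ N := by
  rw [qExp, qExp, ← Complex.exp_nat_mul]
  ring_nf

end EtaAux

/-- The logarithmic derivative `(1/(2πi)) d/dτ log(η(Nτ)/η(τ))` equals `E₂^{(N)}(τ)`. -/
theorem E2N_eq_eta_log_deriv (N : ℕ) (hN : 2 ≤ N) (τ : ℍ) :
    (1 / (2 * (Real.pi : ℂ) * Complex.I)) *
      ((N : ℂ) * deriv dedekindEta ((N : ℂ) * τ) / dedekindEta ((N : ℂ) * τ) -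
        deriv dedekindEta (τ : ℂ) / dedekindEta (τ : ℂ)) = E2N N (τ : ℂ) := by
  have hz : 0 < (τ : ℂ).im := τ.2
  have hNpos : (0:ℝ) < (N : ℝ) := by exact_mod_cast Nat.pos_of_ne_zero (by omega)
  have hNz : 0 < ((N : ℂ) * (τ : ℂ)).im := by
    have him : ((N : ℂ) * (τ : ℂ)).im = (N : ℝ) * (τ : ℂ).im := by
      simp
    rw [him]
    exact mul_pos hNpos hz
  have hq : ‖qExp (τ : ℂ)‖ < 1 := EtaAux.norm_qExp_lt_one hz
  have hqN : ‖qExp (τ : ℂ) ^ N‖ < 1 := by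
    rw [norm_pow]
    exact pow_lt_one₀ (norm_nonneg _) hq (by omega)
  have hA : Summable (fun m : ℕ+ => (sigma' 1 m : ℂ) * qExp (τ : ℂ) ^ (m : ℕ)) :=
    EtaAux.summable_sigma_q hq
  have hB : Summable (fun m : ℕ+ => (sigma' 1 m : ℂ) * (qExp (τ : ℂ) ^ N) ^ (m : ℕ)) :=
    EtaAux.summable_sigma_q hqN
  rw [mul_div_assoc, EtaAux.eta_logDeriv hz, EtaAux.eta_logDeriv hNz]
  rw [EtaAux.qExp_nat_mul N (τ : ℂ)]
  rw [E2N]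
  have hsplit : (∑' n : ℕ+, (sigma' 1 n : ℂ) *
        (qExp (τ : ℂ) ^ (n : ℕ) - (N : ℂ) * qExp (τ : ℂ) ^ (N * (n : ℕ))))
      = (∑' m : ℕ+, (sigma' 1 m : ℂ) * qExp (τ : ℂ) ^ (m : ℕ))
        - (N : ℂ) * ∑' m : ℕ+, (sigma' 1 m : ℂ) * (qExp (τ : ℂ) ^ N) ^ (m : ℕ) := by
    have hterm : ∀ n : ℕ+, (sigma' 1 n : ℂ) *
        (qExp (τ : ℂ) ^ (n : ℕ) - (N : ℂ) * qExp (τ : ℂ) ^ (N * (n : ℕ)))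
        = (sigma' 1 n : ℂ) * qExp (τ : ℂ) ^ (n : ℕ)
          - (N : ℂ) * ((sigma' 1 n : ℂ) * (qExp (τ : ℂ) ^ N) ^ (n : ℕ)) := by
      intro n
      rw [← pow_mul]
      ring
    rw [tsum_congr hterm, Summable.tsum_sub hA (hB.mul_left _), tsum_mul_left]
  rw [hsplit]
  have hpi : (Real.pi : ℂ) ≠ 0 := Complex.ofReal_ne_zero.mpr Real.pi_ne_zero
  have hI : Complex.I ≠ 0 := Complex.I_ne_zero
  field_simp
  ring
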